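/- (Subadditivity of optimal GFT in sellers.) Fix value vectors: a single buyer-value vector b of length r, and t seller-value vectors s₁,...,s_t of lengths m₁,...,m_t. Let OPT(s, b) denote the optimal gains from trade Σ_j (b^(j) - s^(j))₊ where b^(j) is the j-th highest buyer value (padded with -∞ beyond r) and s^(j) the j-th lowest seller value. Then OPT over the combined market with all Σm_i sellers and the r buyers is at most the sum over i of OPT over the market with sellers s_i and the same r buyers. -/

import Mathlib

/-- The optimal gains from trade of a double-auction market with seller values `s` and buyer
values `b`: `Σ_j (b^(j) - s^(j))₊`, where `b^(j)` is the `j`-th highest buyer value (terms with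
`j` beyond the number of buyers vanish, corresponding to padding with `-∞`) and `s^(j)` the
`j`-th lowest seller value, `j` ranging over `1,...,|s|`. -/
noncomputable def optGFT (s b : Multiset ℝ) : ℝ :=
  ∑ j ∈ Finset.range (min (Multiset.card s) (Multiset.card b)),
    max ((b.sort (· ≤ ·)).getD (Multiset.card b - 1 - j) 0
          - (s.sort (· ≤ ·)).getD j 0) 0

private lemma getD_sorted_mono {l : List ℝ} (h : l.Pairwise (· ≤ ·)) {i j : ℕ}
    (hij : i ≤ j) (hj : j < l.length) : l.getD i 0 ≤ l.getD j 0 := by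
  have hi : i < l.length := lt_of_le_of_lt hij hj
  rw [List.getD_eq_getElem l 0 hi, List.getD_eq_getElem l 0 hj]
  exact h.rel_get_of_le (a := ⟨i, hi⟩) (b := ⟨j, hj⟩) hij

/-- Key merge lemma: for `g` antitone in the index and in the value, summing `g j (l j)` over
a sorted merge `l` of sorted lists `l1`, `l2` is at most the sum of the per-list sums. -/
private lemma key_merge :
    ∀ (l : List ℝ) (g : ℕ → ℝ → ℝ),
      (∀ j v, g (j + 1) v ≤ g j v) →
      (∀ j u v, u ≤ v → g j v ≤ g j u) →
      ∀ (l1 l2 : List ℝ), l.Pairwise (· ≤ ·) → l1.Pairwise (· ≤ ·) → l2.Pairwise (· ≤ ·) →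
        l.Perm (l1 ++ l2) →
        ∑ j ∈ Finset.range l.length, g j (l.getD j 0) ≤
          (∑ j ∈ Finset.range l1.length, g j (l1.getD j 0)) +
          ∑ j ∈ Finset.range l2.length, g j (l2.getD j 0) := by
  intro l
  induction l with
  | nil =>
    intro g hg1 hg2 l1 l2 _ _ _ hperm
    have h12 : l1 ++ l2 = [] := (hperm.symm.eq_nil)
    have h1 : l1 = [] := by cases l1 <;> simp_all
    have h2 : l2 = [] := by simp_all
    simp [h1, h2]
  | cons x l' ih =>
    intro g hg1 hg2 l1 l2 hl hl1 hl2 hperm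
    rw [List.pairwise_cons] at hl
    obtain ⟨hxle, hl'⟩ := hl
    have hxmem : x ∈ l1 ++ l2 := hperm.subset (List.mem_cons_self (a := x) (l := l'))
    -- x is ≤ every member of l1 ++ l2
    have hxmin : ∀ y ∈ l1 ++ l2, x ≤ y := by
      intro y hy
      have := hperm.symm.subset hy
      rcases List.mem_cons.mp this with h | h
      · exact le_of_eq h.symm
      · exact hxle y h
    have hshift1 : ∀ j v, (fun j v => g (j + 1) v) (j + 1) v ≤ (fun j v => g (j + 1) v) j v :=
      fun j v => hg1 (j + 1) v
    have hshift2 : ∀ j u v, u ≤ v →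
        (fun j v => g (j + 1) v) j v ≤ (fun j v => g (j + 1) v) j u :=
      fun j u v h => hg2 (j + 1) u v h
    rcases List.mem_append.mp hxmem with hx1 | hx2
    · -- x comes from l1
      cases l1 with
      | nil => simp at hx1
      | cons y l1' =>
        rw [List.pairwise_cons] at hl1
        obtain ⟨hyle, hl1'⟩ := hl1
        have hyx : y = x := by
          have h1 : y ≤ x := by
            rcases List.mem_cons.mp hx1 with h | h
            · exact le_of_eq h.symm
            · exact hyle x h
          have h2 : x ≤ y := hxmin y (by simp)
          exact le_antisymm h1 h2
        subst hyx
        have hperm' : l'.Perm (l1' ++ l2) := (hperm : (y :: l').Perm (y :: (l1' ++ l2))).cons_inv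
        have hIH := ih (fun j v => g (j + 1) v) hshift1 hshift2 l1' l2 hl' hl1' hl2 hperm'
        beta_reduce at hIH
        have hmono2 : ∑ j ∈ Finset.range l2.length, g (j + 1) (l2.getD j 0) ≤
            ∑ j ∈ Finset.range l2.length, g j (l2.getD j 0) :=
          Finset.sum_le_sum fun j _ => hg1 j _
        simp only [List.length_cons]
        rw [Finset.sum_range_succ' (fun j => g j ((y :: l').getD j 0)),
          Finset.sum_range_succ' (fun j => g j ((y :: l1').getD j 0))]
        simp only [List.getD_cons_succ, List.getD_cons_zero]
        linarith
    · -- x comes from l2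
      cases l2 with
      | nil => simp at hx2
      | cons y l2' =>
        rw [List.pairwise_cons] at hl2
        obtain ⟨hyle, hl2'⟩ := hl2
        have hyx : y = x := by
          have h1 : y ≤ x := by
            rcases List.mem_cons.mp hx2 with h | h
            · exact le_of_eq h.symm
            · exact hyle x h
          have h2 : x ≤ y := hxmin y (by simp)
          exact le_antisymm h1 h2
        subst hyx
        have hperm' : l'.Perm (l1 ++ l2') :=
          (hperm.trans List.perm_middle).cons_inv
        have hIH := ih (fun j v => g (j + 1) v) hshift1 hshift2 l1 l2' hl' hl1 hl2' hperm'
        beta_reduce at hIH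
        -- shift down group-1 terms
        have hmono1 : ∑ j ∈ Finset.range l1.length, g (j + 1) (l1.getD j 0) ≤
            ∑ j ∈ Finset.range l1.length, g j (l1.getD j 0) :=
          Finset.sum_le_sum fun j _ => hg1 j _
        simp only [List.length_cons]
        rw [Finset.sum_range_succ' (fun j => g j ((y :: l').getD j 0)),
          Finset.sum_range_succ' (fun j => g j ((y :: l2').getD j 0))]
        simp only [List.getD_cons_succ, List.getD_cons_zero]
        linarith

/-- Rewriting `optGFT` as a sum over all of `range (card s)` with a truncated summand. -/
private lemma optGFT_eq (s b : Multiset ℝ) :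
    optGFT s b = ∑ j ∈ Finset.range (Multiset.card s),
      (if j < Multiset.card b then
        max ((b.sort (· ≤ ·)).getD (Multiset.card b - 1 - j) 0
          - (s.sort (· ≤ ·)).getD j 0) 0 else 0) := by
  rw [optGFT]
  have h1 : ∑ j ∈ Finset.range (min (Multiset.card s) (Multiset.card b)),
        max ((b.sort (· ≤ ·)).getD (Multiset.card b - 1 - j) 0
          - (s.sort (· ≤ ·)).getD j 0) 0
      = ∑ j ∈ Finset.range (min (Multiset.card s) (Multiset.card b)),
        (if j < Multiset.card b then
          max ((b.sort (· ≤ ·)).getD (Multiset.card b - 1 - j) 0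
            - (s.sort (· ≤ ·)).getD j 0) 0 else 0) := by
    refine Finset.sum_congr rfl fun j hj => ?_
    rw [Finset.mem_range, lt_min_iff] at hj
    rw [if_pos hj.2]
  rw [h1]
  refine Finset.sum_subset (Finset.range_subset_range.mpr (min_le_left _ _)) ?_
  intro j hj hj'
  rw [Finset.mem_range] at hj
  rw [Finset.mem_range, lt_min_iff, not_and_or] at hj'
  have : ¬ j < Multiset.card b := by tauto
  rw [if_neg this]

private lemma optGFT_add (s s' b : Multiset ℝ) :
    optGFT (s + s') b ≤ optGFT s b + optGFT s' b := by
  set n := Multiset.card b with hn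
  set g : ℕ → ℝ → ℝ := fun j v =>
    if j < n then max ((b.sort (· ≤ ·)).getD (n - 1 - j) 0 - v) 0 else 0 with hgdef
  have hbs : (b.sort (· ≤ ·)).Pairwise (· ≤ ·) := Multiset.pairwise_sort _ _
  have hblen : (b.sort (· ≤ ·)).length = n := Multiset.length_sort _
  have hg1 : ∀ j v, g (j + 1) v ≤ g j v := by
    intro j v
    simp only [hgdef]
    by_cases h1 : j + 1 < n
    · have h2 : j < n := Nat.lt_of_succ_lt h1
      rw [if_pos h1, if_pos h2]
      have hidx : n - 1 - (j + 1) ≤ n - 1 - j := by omega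
      have hlt : n - 1 - j < (b.sort (· ≤ ·)).length := by omega
      have := getD_sorted_mono hbs hidx hlt
      exact max_le_max (by linarith) le_rfl
    · rw [if_neg h1]
      by_cases h2 : j < n
      · rw [if_pos h2]; exact le_max_right _ _
      · rw [if_neg h2]
    
  have hg2 : ∀ j u v, u ≤ v → g j v ≤ g j u := by
    intro j u v huv
    simp only [hgdef]
    by_cases h : j < n
    · rw [if_pos h, if_pos h]
      exact max_le_max (by linarith) le_rfl
    · rw [if_neg h, if_neg h]
  have hperm : ((s + s').sort (· ≤ ·)).Perm ((s.sort (· ≤ ·)) ++ (s'.sort (· ≤ ·))) := by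
    rw [← Multiset.coe_eq_coe, ← Multiset.coe_add]
    simp [Multiset.sort_eq]
  have hkey := key_merge ((s + s').sort (· ≤ ·)) g hg1 hg2
    (s.sort (· ≤ ·)) (s'.sort (· ≤ ·))
    (Multiset.pairwise_sort _ _) (Multiset.pairwise_sort _ _) (Multiset.pairwise_sort _ _) hperm
  rw [optGFT_eq, optGFT_eq, optGFT_eq]
  simpa [Multiset.length_sort, hgdef, ← hn] using hkey

/-- Subadditivity of the optimal gains from trade in sellers: the optimum of the combined
market with all seller groups `s i` and the buyers `b` is at most the sum over `i` of the
optimum of the market with sellers `s i` and the same buyers `b`. -/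
theorem optGFT_subadditive_in_sellers (t : ℕ) (s : Fin t → Multiset ℝ) (b : Multiset ℝ) :
    optGFT (∑ i, s i) b ≤ ∑ i, optGFT (s i) b := by
  induction t with
  | zero => simp [optGFT]
  | succ t ih =>
    rw [Fin.sum_univ_succ, Fin.sum_univ_succ]
    calc optGFT (s 0 + ∑ i : Fin t, s i.succ) b
        ≤ optGFT (s 0) b + optGFT (∑ i : Fin t, s i.succ) b := optGFT_add _ _ _
      _ ≤ optGFT (s 0) b + ∑ i : Fin t, optGFT (s i.succ) b := by
          linarith [ih (fun i => s i.succ)]
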